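/- Let n, p be positive integers with gcd(n, n+p) = 1. The restriction operator E_γ P(t) = P(cos(nt), cos((n+p)t)) is an isometry from the polynomial space Π_{n,p}^{2,L} = span{T_i(x)T_j(y) : (i,j) ∈ Γ_{n,p}^L} with the product-Chebyshev inner product into the even trigonometric polynomials of degree ≤ n(n+p) with inner product (1/π)∫₀^π q₁q₂ dt; in particular ⟨P₁,P₂⟩ = (1/π)∫₀^π E_γP₁(t)·E_γP₂(t) dt for all P₁, P₂ ∈ Π_{n,p}^{2,L}. -/

import Mathlib

open Real MeasureTheory

noncomputable def Efun (a b : ℤ) : ℝ := (if a = b then 1 else 0) + (if a = -b then 1 else 0)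

lemma integral_cos_int (c : ℤ) :
    ∫ t in (0:ℝ)..π, Real.cos (c * t) = if c = 0 then π else 0 := by
  rcases eq_or_ne c 0 with rfl | hc
  · simp
  · rw [if_neg hc]
    have hcr : (c : ℝ) ≠ 0 := Int.cast_ne_zero.mpr hc
    have hder : ∀ t : ℝ, HasDerivAt (fun t : ℝ => Real.sin (c * t) / c) (Real.cos (c * t)) t := by
      intro t
      have h1 : HasDerivAt (fun t : ℝ => (c : ℝ) * t) c t := by
        simpa using (hasDerivAt_id t).const_mul (c : ℝ)
      have h2 := (Real.hasDerivAt_sin ((c : ℝ) * t)).comp t h1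
      have h3 := h2.div_const (c : ℝ)
      rw [mul_div_assoc, div_self hcr, mul_one] at h3
      exact h3
    rw [intervalIntegral.integral_eq_sub_of_hasDerivAt (fun t _ => hder t)
      (((Real.continuous_cos.comp (continuous_const.mul continuous_id))).intervalIntegrable 0 π)]
    simp [Real.sin_int_mul_pi]

lemma cosII (a b : ℤ) : IntervalIntegrable (fun t : ℝ => Real.cos (a * t) * Real.cos (b * t))
    volume 0 π := by
  apply Continuous.intervalIntegrable
  fun_prop

lemma cosI1 (a : ℤ) : IntervalIntegrable (fun t : ℝ => Real.cos (a * t)) volume 0 π := by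
  apply Continuous.intervalIntegrable
  fun_prop

lemma integral_cos_mul_cos (a b : ℤ) :
    ∫ t in (0:ℝ)..π, Real.cos (a * t) * Real.cos (b * t) = π / 2 * Efun a b := by
  have key : ∀ t : ℝ, Real.cos (a * t) * Real.cos (b * t)
      = (Real.cos (((a + b : ℤ) : ℝ) * t) + Real.cos (((a - b : ℤ) : ℝ) * t)) / 2 := by
    intro t
    push_cast
    rw [show ((a : ℝ) + b) * t = a * t + b * t by ring,
        show ((a : ℝ) - b) * t = a * t - b * t by ring, Real.cos_add, Real.cos_sub]
    ring
  simp_rw [key]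
  rw [intervalIntegral.integral_div, intervalIntegral.integral_add (cosI1 _) (cosI1 _),
    integral_cos_int, integral_cos_int]
  have e1 : (a + b = 0) ↔ (a = -b) := by omega
  have e2 : (a - b = 0) ↔ (a = b) := by omega
  simp only [e1, e2]
  unfold Efun
  split_ifs <;> ring

lemma cos_prod_to_sum (a b : ℤ) (t : ℝ) : Real.cos (a * t) * Real.cos (b * t)
    = (Real.cos (((a + b : ℤ) : ℝ) * t) + Real.cos (((a - b : ℤ) : ℝ) * t)) / 2 := by
  push_cast
  rw [show ((a : ℝ) + b) * t = a * t + b * t by ring,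
      show ((a : ℝ) - b) * t = a * t - b * t by ring, Real.cos_add, Real.cos_sub]
  ring

lemma integral_cos4 (a b a' b' : ℤ) :
    ∫ t in (0:ℝ)..π, Real.cos (a * t) * Real.cos (b * t) *
      (Real.cos (a' * t) * Real.cos (b' * t))
    = π / 8 * (Efun (a + b) (a' + b') + Efun (a + b) (a' - b')
        + Efun (a - b) (a' + b') + Efun (a - b) (a' - b')) := by
  have key : ∀ t : ℝ, Real.cos (a * t) * Real.cos (b * t) *
      (Real.cos (a' * t) * Real.cos (b' * t))
      = (Real.cos (((a + b : ℤ) : ℝ) * t) * Real.cos (((a' + b' : ℤ) : ℝ) * t)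
        + Real.cos (((a + b : ℤ) : ℝ) * t) * Real.cos (((a' - b' : ℤ) : ℝ) * t)
        + Real.cos (((a - b : ℤ) : ℝ) * t) * Real.cos (((a' + b' : ℤ) : ℝ) * t)
        + Real.cos (((a - b : ℤ) : ℝ) * t) * Real.cos (((a' - b' : ℤ) : ℝ) * t)) / 4 := by
    intro t
    rw [cos_prod_to_sum a b, cos_prod_to_sum a' b']
    ring
  simp_rw [key]
  rw [intervalIntegral.integral_div,
    intervalIntegral.integral_add (((cosII _ _).add (cosII _ _)).add (cosII _ _)) (cosII _ _),
    intervalIntegral.integral_add ((cosII _ _).add (cosII _ _)) (cosII _ _),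
    intervalIntegral.integral_add (cosII _ _) (cosII _ _),
    integral_cos_mul_cos, integral_cos_mul_cos, integral_cos_mul_cos, integral_cos_mul_cos]
  ring

lemma cos_image_Ioo : Real.cos '' Set.Ioo 0 π = Set.Ioo (-1 : ℝ) 1 := by
  ext x
  constructor
  · rintro ⟨t, ⟨ht0, htπ⟩, rfl⟩
    constructor
    · have := Real.strictAntiOn_cos ⟨ht0.le, htπ.le⟩ ⟨le_of_lt (lt_of_le_of_lt ht0.le htπ), le_refl π⟩ htπ
      simpa using this
    · have := Real.strictAntiOn_cos ⟨le_refl 0, Real.pi_pos.le⟩ ⟨ht0.le, htπ.le⟩ ht0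
      simpa using this
  · rintro ⟨hx1, hx2⟩
    refine ⟨Real.arccos x, ⟨Real.arccos_pos.2 hx2, ?_⟩, Real.cos_arccos hx1.le hx2.le⟩
    rcases lt_or_eq_of_le (Real.arccos_le_pi x) with h | h
    · exact h
    · exfalso
      have : Real.cos (Real.arccos x) = -1 := by rw [h]; simp
      rw [Real.cos_arccos hx1.le hx2.le] at this
      linarith

lemma cov (g : ℝ → ℝ) :
    ∫ x in (-1:ℝ)..1, g x = ∫ t in (0:ℝ)..π, Real.sin t * g (Real.cos t) := by
  have h1 : ∫ x in (-1:ℝ)..1, g x = ∫ x in Set.Ioo (-1:ℝ) 1, g x := by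
    rw [intervalIntegral.integral_of_le (by norm_num), MeasureTheory.integral_Ioc_eq_integral_Ioo]
  have h2 : ∫ t in (0:ℝ)..π, Real.sin t * g (Real.cos t)
      = ∫ t in Set.Ioo (0:ℝ) π, Real.sin t * g (Real.cos t) := by
    rw [intervalIntegral.integral_of_le Real.pi_pos.le, MeasureTheory.integral_Ioc_eq_integral_Ioo]
  rw [h1, h2, ← cos_image_Ioo,
    MeasureTheory.integral_image_eq_integral_abs_deriv_smul measurableSet_Ioo
      (fun t _ => (Real.hasDerivAt_cos t).hasDerivWithinAt)
      (Real.injOn_cos.mono Set.Ioo_subset_Icc_self) g]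
  apply MeasureTheory.setIntegral_congr_fun measurableSet_Ioo
  intro t ht
  have hs : 0 < Real.sin t := Real.sin_pos_of_pos_of_lt_pi ht.1 ht.2
  simp [abs_of_pos hs, smul_eq_mul]

lemma sqrt_one_sub_cos_sq {t : ℝ} (ht : t ∈ Set.Ioo (0:ℝ) π) :
    Real.sqrt (1 - Real.cos t ^ 2) = Real.sin t := by
  rw [show 1 - Real.cos t ^ 2 = Real.sin t ^ 2 by
      have := Real.sin_sq_add_cos_sq t; linarith,
    Real.sqrt_sq (Real.sin_pos_of_pos_of_lt_pi ht.1 ht.2).le]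

lemma double_cov (R : ℝ → ℝ → ℝ) :
    (∫ x in (-1:ℝ)..1, ∫ y in (-1:ℝ)..1,
        R x y / (Real.sqrt (1 - x ^ 2) * Real.sqrt (1 - y ^ 2)))
    = ∫ u in (0:ℝ)..π, ∫ v in (0:ℝ)..π, R (Real.cos u) (Real.cos v) := by
  rw [cov (fun x => ∫ y in (-1:ℝ)..1, R x y / (Real.sqrt (1 - x ^ 2) * Real.sqrt (1 - y ^ 2)))]
  rw [intervalIntegral.integral_of_le Real.pi_pos.le, MeasureTheory.integral_Ioc_eq_integral_Ioo,
    intervalIntegral.integral_of_le Real.pi_pos.le, MeasureTheory.integral_Ioc_eq_integral_Ioo]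
  apply MeasureTheory.setIntegral_congr_fun measurableSet_Ioo
  intro u hu
  have hsu : 0 < Real.sin u := Real.sin_pos_of_pos_of_lt_pi hu.1 hu.2
  have hqu : Real.sqrt (1 - Real.cos u ^ 2) = Real.sin u := sqrt_one_sub_cos_sq hu
  simp only
  rw [cov (fun y => R (Real.cos u) y / (Real.sqrt (1 - Real.cos u ^ 2) * Real.sqrt (1 - y ^ 2)))]
  rw [intervalIntegral.integral_of_le Real.pi_pos.le, MeasureTheory.integral_Ioc_eq_integral_Ioo,
    intervalIntegral.integral_of_le Real.pi_pos.le, MeasureTheory.integral_Ioc_eq_integral_Ioo,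
    ← MeasureTheory.integral_const_mul]
  apply MeasureTheory.setIntegral_congr_fun measurableSet_Ioo
  intro v hv
  have hsv : 0 < Real.sin v := Real.sin_pos_of_pos_of_lt_pi hv.1 hv.2
  have hqv : Real.sqrt (1 - Real.cos v ^ 2) = Real.sin v := sqrt_one_sub_cos_sq hv
  simp only
  rw [hqu, hqv]
  field_simp


lemma aux_dvd {N M : ℤ} (hcop : IsCoprime N M) {a b : ℤ} (h : a * N = b * M) : M ∣ a :=
  hcop.symm.dvd_of_dvd_mul_right ⟨b, by linarith⟩

-- (1)/(7): i*N + j*M = k*N + l*M ↔ i = k ∧ j = l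
lemma aux1 {N M : ℤ} (hN : 0 < N) (hM : 0 < M) (hcop : IsCoprime N M)
    {i j k l : ℤ} (hi0 : 0 ≤ i) (hiM : i < M) (hk0 : 0 ≤ k) (hkM : k < M) :
    i * N + j * M = k * N + l * M ↔ i = k ∧ j = l := by
  constructor
  · intro h
    have h' : (i - k) * N = (l - j) * M := by linarith
    have hd : M ∣ (i - k) := aux_dvd hcop h'
    have hik : i - k = 0 := Int.eq_zero_of_abs_lt_dvd hd (abs_lt.mpr ⟨by linarith, by linarith⟩)
    have hik' : i = k := by omega
    refine ⟨hik', ?_⟩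
    subst hik'
    have : j * M = l * M := by linarith
    exact mul_right_cancel₀ (by omega) this
  · rintro ⟨rfl, rfl⟩; rfl

-- (3)/(5): i*N + j*M = k*N - l*M ↔ i = k ∧ j = 0 ∧ l = 0
lemma aux3 {N M : ℤ} (hN : 0 < N) (hM : 0 < M) (hcop : IsCoprime N M)
    {i j k l : ℤ} (hi0 : 0 ≤ i) (hiM : i < M) (hj0 : 0 ≤ j) (hl0 : 0 ≤ l)
    (hk0 : 0 ≤ k) (hkM : k < M) :
    i * N + j * M = k * N - l * M ↔ i = k ∧ j = 0 ∧ l = 0 := by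
  constructor
  · intro h
    have h' : (i - k) * N = (-(j + l)) * M := by linarith
    have hd : M ∣ (i - k) := aux_dvd hcop h'
    have hik : i - k = 0 := Int.eq_zero_of_abs_lt_dvd hd (abs_lt.mpr ⟨by linarith, by linarith⟩)
    have hik' : i = k := by omega
    subst hik'
    have hjl : (j + l) * M = 0 := by linarith
    have : j + l = 0 := by
      rcases mul_eq_zero.mp hjl with h | h
      · exact h
      · omega
    exact ⟨rfl, by omega, by omega⟩
  · rintro ⟨rfl, rfl, rfl⟩; ring

-- (4)/(6): i*N + j*M = -(k*N - l*M) ↔ i = 0 ∧ k = 0 ∧ j = l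
lemma aux4 {N M : ℤ} (hN : 0 < N) (hM : 0 < M) (hcop : IsCoprime N M)
    {i j k l : ℤ} (hi0 : 0 ≤ i) (hiM : i < M) (hj0 : 0 ≤ j) (hjN : j ≤ N)
    (hk0 : 0 ≤ k) (hkM : k < M) (hl0 : 0 ≤ l) (hlN : l ≤ N)
    (hC2 : k * N + l * M ≤ N * M) :
    i * N + j * M = -(k * N - l * M) ↔ i = 0 ∧ k = 0 ∧ j = l := by
  constructor
  · intro h
    have h' : (i + k) * N = (l - j) * M := by linarith
    have hd : M ∣ (i + k) := aux_dvd hcop h'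
    rcases hd with ⟨e, he⟩
    have he0 : 0 ≤ e := by nlinarith
    have he2 : e ≤ 1 := by nlinarith
    interval_cases e
    · have hi : i = 0 := by omega
      have hk : k = 0 := by omega
      subst hi; subst hk
      have : (l - j) * M = 0 := by linarith
      have : l - j = 0 := by
        rcases mul_eq_zero.mp this with h | h
        · exact h
        · omega
      exact ⟨rfl, rfl, by omega⟩
    · exfalso
      have hik : i + k = M := by omega
      have hlj : l - j = N := by
        have : (l - j) * M = N * M := by rw [← h']; nlinarith [he]
        exact mul_right_cancel₀ (by omega) this
      have hl' : l = N := by omega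
      have hlM : l * M = N * M := by rw [hl']
      have hkN : k * N ≤ 0 := by linarith
      have hk' : k = 0 := by nlinarith
      omega
  · rintro ⟨rfl, rfl, rfl⟩; ring

-- (2): i*N + j*M = -(k*N + l*M) ↔ all zero
lemma aux2 {N M : ℤ} (hN : 0 < N) (hM : 0 < M)
    {i j k l : ℤ} (hi0 : 0 ≤ i) (hj0 : 0 ≤ j) (hk0 : 0 ≤ k) (hl0 : 0 ≤ l) :
    i * N + j * M = -(k * N + l * M) ↔ i = 0 ∧ j = 0 ∧ k = 0 ∧ l = 0 := by
  constructor
  · intro h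
    have h1 : (i + k) * N + (j + l) * M = 0 := by linarith
    have h2 : 0 ≤ (i + k) * N := mul_nonneg (by omega) (by omega)
    have h3 : 0 ≤ (j + l) * M := mul_nonneg (by omega) (by omega)
    have h4 : (i + k) * N = 0 := by linarith
    have h5 : (j + l) * M = 0 := by linarith
    have h6 : i + k = 0 := by rcases mul_eq_zero.mp h4 with h | h; exact h; omega
    have h7 : j + l = 0 := by rcases mul_eq_zero.mp h5 with h | h; exact h; omega
    exact ⟨by omega, by omega, by omega, by omega⟩
  · rintro ⟨rfl, rfl, rfl, rfl⟩; ring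

-- (8): i*N - j*M = -(k*N - l*M) ↔ all zero (uses both extremal conditions)
lemma aux8 {N M : ℤ} (hN : 0 < N) (hM : 0 < M) (hcop : IsCoprime N M)
    {i j k l : ℤ} (hi0 : 0 ≤ i) (hiM : i < M) (hj0 : 0 ≤ j)
    (hk0 : 0 ≤ k) (hkM : k < M) (hl0 : 0 ≤ l)
    (hC1 : i * N + j * M ≤ N * M) (hE1 : i * N + j * M = N * M → i = 0 ∧ j = N)
    (hC2 : k * N + l * M ≤ N * M) :
    i * N - j * M = -(k * N - l * M) ↔ i = 0 ∧ j = 0 ∧ k = 0 ∧ l = 0 := by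
  constructor
  · intro h
    have h' : (i + k) * N = (j + l) * M := by linarith
    have hd : M ∣ (i + k) := aux_dvd hcop h'
    rcases hd with ⟨e, he⟩
    have he0 : 0 ≤ e := by nlinarith
    have he2 : e ≤ 1 := by nlinarith
    interval_cases e
    · have hi : i = 0 := by omega
      have hk : k = 0 := by omega
      subst hi; subst hk
      have h0 : (j + l) * M = 0 := by linarith
      have : j + l = 0 := by rcases mul_eq_zero.mp h0 with h | h; exact h; omega
      exact ⟨rfl, by omega, rfl, by omega⟩
    · exfalso
      have hik : i + k = M := by omega
      have hjl : j + l = N := by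
        have : (j + l) * M = N * M := by rw [← h']; nlinarith [he]
        exact mul_right_cancel₀ (by omega) this
      have hsum : (i * N + j * M) + (k * N + l * M) = 2 * (N * M) := by nlinarith
      have hEq1 : i * N + j * M = N * M := by linarith
      have := hE1 hEq1
      omega
  · rintro ⟨rfl, rfl, rfl, rfl⟩; ring

lemma ite_and_one (p q : Prop) [Decidable p] [Decidable q] :
    (if p ∧ q then (1:ℝ) else 0) = (if p then (1:ℝ) else 0) * (if q then (1:ℝ) else 0) := by
  by_cases hp : p <;> by_cases hq : q <;> simp [hp, hq]

set_option maxHeartbeats 2000000 in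
lemma key_combinatorial {N M : ℤ} (hN : 0 < N) (hM : 0 < M) (hcop : IsCoprime N M)
    {i j k l : ℤ} (hi0 : 0 ≤ i) (hiM : i < M) (hj0 : 0 ≤ j) (hjN : j ≤ N)
    (hk0 : 0 ≤ k) (hkM : k < M) (hl0 : 0 ≤ l) (hlN : l ≤ N)
    (hC1 : i * N + j * M ≤ N * M) (hE1 : i * N + j * M = N * M → i = 0 ∧ j = N)
    (hC2 : k * N + l * M ≤ N * M) (hE2 : k * N + l * M = N * M → k = 0 ∧ l = N) :
    Efun (i * N + j * M) (k * N + l * M) + Efun (i * N + j * M) (k * N - l * M)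
      + Efun (i * N - j * M) (k * N + l * M) + Efun (i * N - j * M) (k * N - l * M)
    = 2 * (Efun i k * Efun j l) := by
  have e1 : i * N + j * M = k * N + l * M ↔ i = k ∧ j = l :=
    aux1 hN hM hcop hi0 hiM hk0 hkM
  have e2 : i * N + j * M = -(k * N + l * M) ↔ i = 0 ∧ j = 0 ∧ k = 0 ∧ l = 0 :=
    aux2 hN hM hi0 hj0 hk0 hl0
  have e3 : i * N + j * M = k * N - l * M ↔ i = k ∧ j = 0 ∧ l = 0 :=
    aux3 hN hM hcop hi0 hiM hj0 hl0 hk0 hkM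
  have e4 : i * N + j * M = -(k * N - l * M) ↔ i = 0 ∧ k = 0 ∧ j = l :=
    aux4 hN hM hcop hi0 hiM hj0 hjN hk0 hkM hl0 hlN hC2
  have e5 : i * N - j * M = k * N + l * M ↔ i = k ∧ j = 0 ∧ l = 0 := by
    rw [show (i * N - j * M = k * N + l * M) ↔ (k * N + l * M = i * N - j * M) from eq_comm]
    rw [aux3 hN hM hcop hk0 hkM hl0 hj0 hi0 hiM]
    omega
  have e6 : i * N - j * M = -(k * N + l * M) ↔ i = 0 ∧ k = 0 ∧ j = l := by
    rw [show (i * N - j * M = -(k * N + l * M)) ↔ (k * N + l * M = -(i * N - j * M)) from by constructor <;> intro h <;> linarith]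
    rw [aux4 hN hM hcop hk0 hkM hl0 hlN hi0 hiM hj0 hjN hC1]
    omega
  have e7 : i * N - j * M = k * N - l * M ↔ i = k ∧ j = l := by
    rw [show (i * N - j * M = k * N - l * M) ↔ (i * N + l * M = k * N + j * M) from by constructor <;> intro h <;> linarith]
    rw [aux1 hN hM hcop hi0 hiM hk0 hkM]
    omega
  have e8 : i * N - j * M = -(k * N - l * M) ↔ i = 0 ∧ j = 0 ∧ k = 0 ∧ l = 0 :=
    aux8 hN hM hcop hi0 hiM hj0 hk0 hkM hl0 hC1 hE1 hC2
  have e9 : (i = -k) ↔ (i = 0 ∧ k = 0) := by omega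
  have e10 : (j = -l) ↔ (j = 0 ∧ l = 0) := by omega
  unfold Efun
  rw [if_congr e1 rfl rfl, if_congr e2 rfl rfl, if_congr e3 rfl rfl, if_congr e4 rfl rfl,
    if_congr e5 rfl rfl, if_congr e6 rfl rfl, if_congr e7 rfl rfl, if_congr e8 rfl rfl,
    if_congr e9 rfl rfl, if_congr e10 rfl rfl]
  simp only [ite_and_one]
  ring

-- bridging lemmas to ℕ
lemma cos_natAbs (z : ℤ) (t : ℝ) :
    Real.cos ((z.natAbs : ℝ) * t) = Real.cos ((z : ℝ) * t) := by
  rw [show ((z.natAbs : ℝ)) = |(z : ℝ)| by rw [Nat.cast_natAbs, Int.cast_abs]]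
  rcases abs_choice (z : ℝ) with h | h <;> rw [h]
  rw [show (-(z:ℝ)) * t = -((z:ℝ) * t) by ring, Real.cos_neg]


lemma constraint_int (n p i j : ℕ) (hn : 0 < n)
    (h : (i : ℝ) / (n + p) + (j : ℝ) / n < 1 ∨ (i, j) = (0, n)) :
    ((i : ℤ) * n + j * (n + p) ≤ n * (n + p)) ∧
      ((i : ℤ) * n + j * (n + p) = n * (n + p) → i = 0 ∧ j = n) := by
  rcases h with h | h
  · have hn' : (0:ℝ) < n := by exact_mod_cast hn
    have hm : (0:ℝ) < (n:ℝ) + p := by positivity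
    rw [div_add_div _ _ (ne_of_gt hm) (ne_of_gt hn'), div_lt_one (by positivity)] at h
    have hN : (i * n + j * (n + p) : ℕ) < n * (n + p) := by
      have : (i:ℝ) * n + j * (n + p) < n * (n + p) := by push_cast at h ⊢; nlinarith
      exact_mod_cast this
    constructor
    · have : ((i * n + j * (n + p) : ℕ) : ℤ) ≤ ((n * (n + p) : ℕ) : ℤ) := by exact_mod_cast hN.le
      push_cast at this; linarith
    · intro hEq
      exfalso
      have : ((i * n + j * (n + p) : ℕ) : ℤ) = ((n * (n + p) : ℕ) : ℤ) := by push_cast; linarith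
      have := this
      omega
  · have h1 : i = 0 := by
      have := congrArg Prod.fst h; simpa using this
    have h2 : j = n := by
      have := congrArg Prod.snd h; simpa using this
    subst h1; subst h2
    constructor
    · push_cast; ring_nf; omega
    · exact fun _ => ⟨rfl, rfl⟩

lemma integral_cos_mul_cos_nat (a b : ℕ) :
    ∫ t in (0:ℝ)..π, Real.cos (a * t) * Real.cos (b * t) = π / 2 * Efun a b := by
  have h := integral_cos_mul_cos (a : ℤ) (b : ℤ)
  push_cast at h
  exact h

lemma integral_cos4_nat (a b a' b' : ℕ) :
    ∫ t in (0:ℝ)..π, Real.cos (a * t) * Real.cos (b * t) *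
      (Real.cos (a' * t) * Real.cos (b' * t))
    = π / 8 * (Efun ((a:ℤ) + b) ((a':ℤ) + b') + Efun ((a:ℤ) + b) ((a':ℤ) - b')
        + Efun ((a:ℤ) - b) ((a':ℤ) + b') + Efun ((a:ℤ) - b) ((a':ℤ) - b')) := by
  have h := integral_cos4 (a : ℤ) (b : ℤ) (a' : ℤ) (b' : ℤ)
  push_cast at h
  exact h

theorem restriction_operator_isometry (n p : ℕ) (hn : 0 < n) (hp : 0 < p)
    (hcop : Nat.Coprime n (n + p))
    (c d : ℕ × ℕ → ℝ)
    (hc : ∀ i j : ℕ,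
      ¬((i : ℝ) / (n + p) + (j : ℝ) / n < 1 ∨ (i, j) = (0, n)) → c (i, j) = 0)
    (hd : ∀ i j : ℕ,
      ¬((i : ℝ) / (n + p) + (j : ℝ) / n < 1 ∨ (i, j) = (0, n)) → d (i, j) = 0)
    (P Q : ℝ → ℝ → ℝ)
    (hP : ∀ x y, P x y = ∑ ij ∈ Finset.range (n + p) ×ˢ Finset.range (n + 1),
      c ij * (Polynomial.Chebyshev.T ℝ ij.1).eval x * (Polynomial.Chebyshev.T ℝ ij.2).eval y)
    (hQ : ∀ x y, Q x y = ∑ ij ∈ Finset.range (n + p) ×ˢ Finset.range (n + 1),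
      d ij * (Polynomial.Chebyshev.T ℝ ij.1).eval x * (Polynomial.Chebyshev.T ℝ ij.2).eval y) :
    (∃ a : ℕ → ℝ, ∀ t,
      P (Real.cos (n * t)) (Real.cos ((n + p) * t)) =
        ∑ m ∈ Finset.range (n * (n + p) + 1), a m * Real.cos (m * t)) ∧
    (1 / π ^ 2) * ∫ x in (-1 : ℝ)..1, ∫ y in (-1 : ℝ)..1,
        P x y * Q x y / (Real.sqrt (1 - x ^ 2) * Real.sqrt (1 - y ^ 2)) =
      (1 / π) * ∫ t in (0 : ℝ)..π,
        P (Real.cos (n * t)) (Real.cos ((n + p) * t)) *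
          Q (Real.cos (n * t)) (Real.cos ((n + p) * t)) := by
  constructor
  · -- Part 1
    refine ⟨fun m => ∑ ij ∈ Finset.range (n + p) ×ˢ Finset.range (n + 1),
      c ij * ((if ij.1 * n + ij.2 * (n + p) = m then (2:ℝ)⁻¹ else 0)
        + (if (((ij.1 * n : ℕ) : ℤ) - ((ij.2 * (n + p) : ℕ) : ℤ)).natAbs = m
            then (2:ℝ)⁻¹ else 0)), fun t => ?_⟩
    rw [hP]
    simp_rw [Finset.sum_mul]
    rw [Finset.sum_comm]
    apply Finset.sum_congr rfl
    intro ij hij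
    by_cases hc0 : c ij = 0
    · simp [hc0]
    have hcond : ((ij.1 : ℝ) / (n + p) + (ij.2 : ℝ) / n < 1 ∨ (ij.1, ij.2) = (0, n)) := by
      by_contra hK
      exact hc0 (by simpa using hc ij.1 ij.2 hK)
    have hcon := constraint_int n p ij.1 ij.2 hn hcond
    have hsN : ij.1 * n + ij.2 * (n + p) ≤ n * (n + p) := by
      have h1 := hcon.1
      have h2 : ((ij.1 * n + ij.2 * (n + p) : ℕ) : ℤ) ≤ ((n * (n + p) : ℕ) : ℤ) := by
        push_cast; linarith
      exact_mod_cast h2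
    have hform : ∀ m : ℕ,
        c ij * ((if ij.1 * n + ij.2 * (n + p) = m then (2:ℝ)⁻¹ else 0)
          + (if (((ij.1 * n : ℕ) : ℤ) - ((ij.2 * (n + p) : ℕ) : ℤ)).natAbs = m
              then (2:ℝ)⁻¹ else 0)) * Real.cos (m * t)
        = (if ij.1 * n + ij.2 * (n + p) = m
            then c ij * (2:ℝ)⁻¹ * Real.cos (m * t) else 0)
          + (if (((ij.1 * n : ℕ) : ℤ) - ((ij.2 * (n + p) : ℕ) : ℤ)).natAbs = m
              then c ij * (2:ℝ)⁻¹ * Real.cos (m * t) else 0) := by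
      intro m; split_ifs <;> ring
    simp_rw [hform]
    rw [Finset.sum_add_distrib, Finset.sum_ite_eq, Finset.sum_ite_eq,
      if_pos (Finset.mem_range.mpr (by omega)), if_pos (Finset.mem_range.mpr (by omega))]
    rw [Polynomial.Chebyshev.T_real_cos, Polynomial.Chebyshev.T_real_cos, cos_natAbs]
    rw [show (((ij.1 : ℤ)) : ℝ) * ((n : ℝ) * t) = (((ij.1 * n : ℕ) : ℤ) : ℝ) * t by
        push_cast; ring,
      show (((ij.2 : ℤ)) : ℝ) * (((n : ℝ) + (p : ℝ)) * t) = (((ij.2 * (n + p) : ℕ) : ℤ) : ℝ) * t by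
        push_cast; ring,
      mul_assoc, cos_prod_to_sum]
    push_cast
    ring
  · -- Part 2
    have hbeta := double_cov (fun x y => P x y * Q x y)
    rw [hbeta]
    have hpoint : ∀ u v : ℝ, P (Real.cos u) (Real.cos v) * Q (Real.cos u) (Real.cos v)
        = ∑ ij ∈ Finset.range (n + p) ×ˢ Finset.range (n + 1),
            ∑ kl ∈ Finset.range (n + p) ×ˢ Finset.range (n + 1),
          ((c ij * d kl) * (Real.cos (ij.1 * u) * Real.cos (kl.1 * u)))
            * (Real.cos (ij.2 * v) * Real.cos (kl.2 * v)) := by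
      intro u v
      rw [hP, hQ, Finset.sum_mul_sum]
      refine Finset.sum_congr rfl fun ij _ => Finset.sum_congr rfl fun kl _ => ?_
      simp only [Polynomial.Chebyshev.T_real_cos]
      push_cast
      ring
    have lhs_inner : ∀ u : ℝ,
        (∫ v in (0:ℝ)..π, P (Real.cos u) (Real.cos v) * Q (Real.cos u) (Real.cos v))
        = ∑ ij ∈ Finset.range (n + p) ×ˢ Finset.range (n + 1),
            ∑ kl ∈ Finset.range (n + p) ×ˢ Finset.range (n + 1),
          ((c ij * d kl) * (π / 2 * Efun ij.2 kl.2))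
            * (Real.cos (ij.1 * u) * Real.cos (kl.1 * u)) := by
      intro u
      simp_rw [hpoint u]
      rw [intervalIntegral.integral_finset_sum (fun ij _ => by
        apply Continuous.intervalIntegrable
        apply continuous_finset_sum
        intro kl _
        fun_prop)]
      refine Finset.sum_congr rfl fun ij _ => ?_
      rw [intervalIntegral.integral_finset_sum (fun kl _ => by
        apply Continuous.intervalIntegrable
        fun_prop)]
      refine Finset.sum_congr rfl fun kl _ => ?_
      rw [intervalIntegral.integral_const_mul, integral_cos_mul_cos_nat]
      ring
    have lhs_eval : (∫ u in (0:ℝ)..π, ∫ v in (0:ℝ)..π,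
          P (Real.cos u) (Real.cos v) * Q (Real.cos u) (Real.cos v))
        = ∑ ij ∈ Finset.range (n + p) ×ˢ Finset.range (n + 1),
            ∑ kl ∈ Finset.range (n + p) ×ˢ Finset.range (n + 1),
          ((c ij * d kl) * (π / 2 * Efun ij.2 kl.2)) * (π / 2 * Efun ij.1 kl.1) := by
      simp_rw [lhs_inner]
      rw [intervalIntegral.integral_finset_sum (fun ij _ => by
        apply Continuous.intervalIntegrable
        apply continuous_finset_sum
        intro kl _
        fun_prop)]
      refine Finset.sum_congr rfl fun ij _ => ?_
      rw [intervalIntegral.integral_finset_sum (fun kl _ => by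
        apply Continuous.intervalIntegrable
        fun_prop)]
      refine Finset.sum_congr rfl fun kl _ => ?_
      rw [intervalIntegral.integral_const_mul, integral_cos_mul_cos_nat]
    have rhs_point : ∀ t : ℝ,
        P (Real.cos (n * t)) (Real.cos ((n + p) * t))
          * Q (Real.cos (n * t)) (Real.cos ((n + p) * t))
        = ∑ ij ∈ Finset.range (n + p) ×ˢ Finset.range (n + 1),
            ∑ kl ∈ Finset.range (n + p) ×ˢ Finset.range (n + 1),
          (c ij * d kl) * (Real.cos ((ij.1 * n : ℕ) * t) * Real.cos ((ij.2 * (n + p) : ℕ) * t)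
            * (Real.cos ((kl.1 * n : ℕ) * t) * Real.cos ((kl.2 * (n + p) : ℕ) * t))) := by
      intro t
      rw [hP, hQ, Finset.sum_mul_sum]
      refine Finset.sum_congr rfl fun ij _ => Finset.sum_congr rfl fun kl _ => ?_
      simp only [Polynomial.Chebyshev.T_real_cos]
      push_cast
      ring
    have rhs_eval : (∫ t in (0:ℝ)..π,
          P (Real.cos (n * t)) (Real.cos ((n + p) * t))
            * Q (Real.cos (n * t)) (Real.cos ((n + p) * t)))
        = ∑ ij ∈ Finset.range (n + p) ×ˢ Finset.range (n + 1),
            ∑ kl ∈ Finset.range (n + p) ×ˢ Finset.range (n + 1),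
          (c ij * d kl) * (π / 8 *
            (Efun (((ij.1 * n : ℕ) : ℤ) + ((ij.2 * (n + p) : ℕ) : ℤ))
                (((kl.1 * n : ℕ) : ℤ) + ((kl.2 * (n + p) : ℕ) : ℤ))
              + Efun (((ij.1 * n : ℕ) : ℤ) + ((ij.2 * (n + p) : ℕ) : ℤ))
                (((kl.1 * n : ℕ) : ℤ) - ((kl.2 * (n + p) : ℕ) : ℤ))
              + Efun (((ij.1 * n : ℕ) : ℤ) - ((ij.2 * (n + p) : ℕ) : ℤ))
                (((kl.1 * n : ℕ) : ℤ) + ((kl.2 * (n + p) : ℕ) : ℤ))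
              + Efun (((ij.1 * n : ℕ) : ℤ) - ((ij.2 * (n + p) : ℕ) : ℤ))
                (((kl.1 * n : ℕ) : ℤ) - ((kl.2 * (n + p) : ℕ) : ℤ)))) := by
      simp_rw [rhs_point]
      rw [intervalIntegral.integral_finset_sum (fun ij _ => by
        apply Continuous.intervalIntegrable
        apply continuous_finset_sum
        intro kl _
        fun_prop)]
      refine Finset.sum_congr rfl fun ij _ => ?_
      rw [intervalIntegral.integral_finset_sum (fun kl _ => by
        apply Continuous.intervalIntegrable
        fun_prop)]
      refine Finset.sum_congr rfl fun kl _ => ?_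
      rw [intervalIntegral.integral_const_mul, integral_cos4_nat]
    rw [lhs_eval, rhs_eval]
    simp_rw [Finset.mul_sum]
    refine Finset.sum_congr rfl fun ij hij => Finset.sum_congr rfl fun kl hkl => ?_
    by_cases hc0 : c ij = 0
    · simp [hc0]
    by_cases hd0 : d kl = 0
    · simp [hd0]
    obtain ⟨hij1, hij2⟩ := Finset.mem_product.mp hij
    obtain ⟨hkl1, hkl2⟩ := Finset.mem_product.mp hkl
    rw [Finset.mem_range] at hij1 hij2 hkl1 hkl2
    have hcond1 : ((ij.1 : ℝ) / (n + p) + (ij.2 : ℝ) / n < 1 ∨ (ij.1, ij.2) = (0, n)) := by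
      by_contra hK
      exact hc0 (by simpa using hc ij.1 ij.2 hK)
    have hcond2 : ((kl.1 : ℝ) / (n + p) + (kl.2 : ℝ) / n < 1 ∨ (kl.1, kl.2) = (0, n)) := by
      by_contra hK
      exact hd0 (by simpa using hd kl.1 kl.2 hK)
    have hcon1 := constraint_int n p ij.1 ij.2 hn hcond1
    have hcon2 := constraint_int n p kl.1 kl.2 hn hcond2
    have hcop' : IsCoprime (n : ℤ) ((n : ℤ) + (p : ℤ)) := by
      have h := hcop.isCoprime
      push_cast at h
      exact h
    have hNpos : (0:ℤ) < (n:ℤ) := by exact_mod_cast hn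
    have hMpos : (0:ℤ) < (n:ℤ) + (p:ℤ) := by positivity
    have hkey := key_combinatorial hNpos hMpos hcop'
      (i := (ij.1 : ℤ)) (j := (ij.2 : ℤ)) (k := (kl.1 : ℤ)) (l := (kl.2 : ℤ))
      (by positivity) (by exact_mod_cast hij1) (by positivity) (by exact_mod_cast (by omega : ij.2 ≤ n))
      (by positivity) (by exact_mod_cast hkl1) (by positivity) (by exact_mod_cast (by omega : kl.2 ≤ n))
      hcon1.1 (fun h => ⟨by exact_mod_cast (hcon1.2 h).1, by exact_mod_cast (hcon1.2 h).2⟩)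
      hcon2.1 (fun h => ⟨by exact_mod_cast (hcon2.2 h).1, by exact_mod_cast (hcon2.2 h).2⟩)
    push_cast
    rw [hkey]
    field_simp
    ring
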